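/- Let p > 1 be real and C ∈ (0,1). Then there exists a unique z ∈ (0,1) such that ⌊z⁻¹⌋·z^p + (1 − ⌊z⁻¹⌋·z)^p = C. -/

import Mathlib

open Real Set

private lemma gval_hasDerivAt (p : ℝ) (hp : 1 < p) (c x : ℝ) :
    HasDerivAt (fun z : ℝ => c * z ^ p + (1 - c * z) ^ p)
      (c * (p * x ^ (p - 1)) + p * (1 - c * x) ^ (p - 1) * (-c)) x := by
  have h1 : HasDerivAt (fun z : ℝ => z ^ p) (p * x ^ (p - 1)) x :=
    Real.hasDerivAt_rpow_const (Or.inr hp.le)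
  have h2 : HasDerivAt (fun z : ℝ => 1 - c * z) (-c) x := by
    simpa using ((hasDerivAt_id x).const_mul c).const_sub 1
  have h3 : HasDerivAt (fun z : ℝ => (1 - c * z) ^ p)
      (p * (1 - c * x) ^ (p - 1) * (-c)) x := by
    have h := (Real.hasDerivAt_rpow_const (x := 1 - c * x) (p := p) (Or.inr hp.le)).comp x h2
    exact h
  exact (h1.const_mul c).add h3

private lemma gmono (p : ℝ) (hp : 1 < p) (n : ℤ) (hn : 1 ≤ n) :
    StrictMonoOn (fun z : ℝ => (n : ℝ) * z ^ p + (1 - (n : ℝ) * z) ^ p)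
      (Icc (((n : ℝ) + 1)⁻¹) ((n : ℝ)⁻¹)) := by
  have hn0 : (0 : ℝ) < (n : ℝ) := by exact_mod_cast hn
  apply strictMonoOn_of_deriv_pos (convex_Icc _ _)
  · exact fun x _ => (gval_hasDerivAt p hp (n : ℝ) x).continuousAt.continuousWithinAt
  · intro x hx
    rw [interior_Icc] at hx
    rw [(gval_hasDerivAt p hp (n : ℝ) x).deriv]
    have hx1 : ((n : ℝ) + 1)⁻¹ < x := hx.1
    have hx2 : x < (n : ℝ)⁻¹ := hx.2
    have hpos : (0 : ℝ) < (n : ℝ) + 1 := by linarith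
    have h1 : 1 < ((n : ℝ) + 1) * x := by
      rw [inv_lt_iff_one_lt_mul₀ (by positivity)] at hx1
      linarith [hx1]
    have h2 : (n : ℝ) * x < 1 := by
      nlinarith [mul_lt_mul_of_pos_left hx2 hn0, mul_inv_cancel₀ hn0.ne']
    have h3 : 0 ≤ 1 - (n : ℝ) * x := by linarith
    have h4 : 1 - (n : ℝ) * x < x := by nlinarith
    have h5 : (1 - (n : ℝ) * x) ^ (p - 1) < x ^ (p - 1) :=
      Real.rpow_lt_rpow h3 h4 (by linarith)
    have hp0 : 0 < p := by linarith
    nlinarith [mul_pos hn0 hp0]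


private lemma aux_val (p a : ℝ) (ha : 0 < a) : a * (a⁻¹) ^ p = a ^ (1 - p) := by
  rw [Real.inv_rpow ha.le, ← Real.rpow_neg ha.le]
  nth_rewrite 1 [← Real.rpow_one a]
  rw [← Real.rpow_add ha]
  ring_nf

private lemma gval_right (p : ℝ) (hp : 1 < p) (n : ℤ) (hn : 1 ≤ n) :
    (n : ℝ) * ((n : ℝ)⁻¹) ^ p + (1 - (n : ℝ) * (n : ℝ)⁻¹) ^ p = (n : ℝ) ^ (1 - p) := by
  have hn0 : (0 : ℝ) < (n : ℝ) := by exact_mod_cast hn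
  rw [mul_inv_cancel₀ hn0.ne', sub_self, Real.zero_rpow (by linarith), add_zero,
    aux_val p _ hn0]

private lemma gval_left (p : ℝ) (hp : 1 < p) (n : ℤ) (hn : 1 ≤ n) :
    (n : ℝ) * (((n : ℝ) + 1)⁻¹) ^ p + (1 - (n : ℝ) * ((n : ℝ) + 1)⁻¹) ^ p
      = ((n : ℝ) + 1) ^ (1 - p) := by
  have hn0 : (0 : ℝ) < (n : ℝ) := by exact_mod_cast hn
  have hm : (0 : ℝ) < (n : ℝ) + 1 := by linarith
  have h : 1 - (n : ℝ) * ((n : ℝ) + 1)⁻¹ = ((n : ℝ) + 1)⁻¹ := by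
    field_simp
    ring
  rw [h, ← aux_val p _ hm]
  ring

private lemma floor_mem (z : ℝ) (hz : z ∈ Ioo (0:ℝ) 1) :
    1 ≤ ⌊z⁻¹⌋ ∧ z ∈ Ioc (((⌊z⁻¹⌋ : ℝ) + 1)⁻¹) ((⌊z⁻¹⌋ : ℝ)⁻¹) := by
  obtain ⟨hz0, hz1⟩ := hz
  have hinv : (1 : ℝ) ≤ z⁻¹ := by
    nlinarith [mul_inv_cancel₀ hz0.ne', inv_pos.mpr hz0]
  set n := ⌊z⁻¹⌋ with hn
  have hn1 : 1 ≤ n := Int.le_floor.mpr (by exact_mod_cast hinv)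
  have hn0 : (0 : ℝ) < (n : ℝ) := by exact_mod_cast hn1
  have hpos : (0 : ℝ) < (n : ℝ) + 1 := by linarith
  have hf1 : (n : ℝ) ≤ z⁻¹ := Int.floor_le _
  have hf2 : z⁻¹ < (n : ℝ) + 1 := by exact_mod_cast Int.lt_floor_add_one (z⁻¹)
  have hnz : (n : ℝ) * z ≤ 1 := by nlinarith [mul_inv_cancel₀ hz0.ne']
  have h1 : z ≤ (n : ℝ)⁻¹ := by nlinarith [mul_inv_cancel₀ hn0.ne', inv_pos.mpr hn0]
  have hnz2 : 1 < ((n : ℝ) + 1) * z := by nlinarith [mul_inv_cancel₀ hz0.ne']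
  have h2 : ((n : ℝ) + 1)⁻¹ < z := by
    nlinarith [mul_inv_cancel₀ hpos.ne', inv_pos.mpr hpos]
  exact ⟨hn1, h2, h1⟩

private lemma floor_eq_of_mem (z : ℝ) (n : ℤ) (hn : 1 ≤ n)
    (hz : z ∈ Ioc (((n : ℝ) + 1)⁻¹) ((n : ℝ)⁻¹)) : ⌊z⁻¹⌋ = n := by
  have hn0 : (0 : ℝ) < (n : ℝ) := by exact_mod_cast hn
  have hpos : (0 : ℝ) < (n : ℝ) + 1 := by linarith
  have hz0 : 0 < z := lt_trans (inv_pos.mpr hpos) hz.1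
  have hnz : (n : ℝ) * z ≤ 1 := by
    nlinarith [mul_inv_cancel₀ hn0.ne', inv_pos.mpr hn0, hz.2]
  have hnz2 : 1 < ((n : ℝ) + 1) * z := by
    nlinarith [mul_inv_cancel₀ hpos.ne', inv_pos.mpr hpos, hz.1]
  have h1 : (n : ℝ) ≤ z⁻¹ := by nlinarith [mul_inv_cancel₀ hz0.ne', inv_pos.mpr hz0]
  have h2 : z⁻¹ < (n : ℝ) + 1 := by nlinarith [mul_inv_cancel₀ hz0.ne', inv_pos.mpr hz0]
  exact Int.floor_eq_iff.mpr ⟨h1, by exact_mod_cast h2⟩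

private lemma fmono (p : ℝ) (hp : 1 < p) :
    StrictMonoOn (fun z : ℝ => (⌊z⁻¹⌋ : ℝ) * z ^ p + (1 - (⌊z⁻¹⌋ : ℝ) * z) ^ p)
      (Ioo (0:ℝ) 1) := by
  intro z₁ h₁ z₂ h₂ hlt
  obtain ⟨hn₁, hz₁⟩ := floor_mem z₁ h₁
  obtain ⟨hn₂, hz₂⟩ := floor_mem z₂ h₂
  set n₁ := ⌊z₁⁻¹⌋
  set n₂ := ⌊z₂⁻¹⌋
  have hn₁0 : (0 : ℝ) < (n₁ : ℝ) := by exact_mod_cast hn₁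
  have hn₂0 : (0 : ℝ) < (n₂ : ℝ) := by exact_mod_cast hn₂
  have hinvlt : z₂⁻¹ ≤ z₁⁻¹ := by
    have h3 := mul_pos (mul_pos (inv_pos.mpr h₁.1) (inv_pos.mpr h₂.1)) (sub_pos.mpr hlt)
    nlinarith [mul_inv_cancel₀ h₁.1.ne', mul_inv_cancel₀ h₂.1.ne',
      inv_pos.mpr h₁.1, inv_pos.mpr h₂.1, h3]
  have hn21 : n₂ ≤ n₁ := Int.floor_le_floor hinvlt
  have hab₁ : (((n₁ : ℝ) + 1)⁻¹) ≤ ((n₁ : ℝ)⁻¹) := le_of_lt (lt_of_lt_of_le hz₁.1 hz₁.2)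
  have hab₂ : (((n₂ : ℝ) + 1)⁻¹) ≤ ((n₂ : ℝ)⁻¹) := le_of_lt (lt_of_lt_of_le hz₂.1 hz₂.2)
  have hmem₁ : z₁ ∈ Icc (((n₁ : ℝ) + 1)⁻¹) ((n₁ : ℝ)⁻¹) := ⟨hz₁.1.le, hz₁.2⟩
  have hmem₂ : z₂ ∈ Icc (((n₂ : ℝ) + 1)⁻¹) ((n₂ : ℝ)⁻¹) := ⟨hz₂.1.le, hz₂.2⟩
  show (n₁ : ℝ) * z₁ ^ p + (1 - (n₁ : ℝ) * z₁) ^ p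
      < (n₂ : ℝ) * z₂ ^ p + (1 - (n₂ : ℝ) * z₂) ^ p
  rcases eq_or_lt_of_le hn21 with heq | hltn
  · -- same piece
    rw [heq] at hmem₂ ⊢
    exact gmono p hp n₁ hn₁ hmem₁ hmem₂ hlt
  · -- different pieces
    have h₁le : (n₁ : ℝ) * z₁ ^ p + (1 - (n₁ : ℝ) * z₁) ^ p ≤ (n₁ : ℝ) ^ (1 - p) := by
      rw [← gval_right p hp n₁ hn₁]
      exact (gmono p hp n₁ hn₁).monotoneOn hmem₁ ⟨hab₁, le_refl _⟩ hz₁.2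
    have hstep : (n₁ : ℝ) ^ (1 - p) ≤ ((n₂ : ℝ) + 1) ^ (1 - p) := by
      apply Real.rpow_le_rpow_of_nonpos (by linarith) ?_ (by linarith)
      have : n₂ + 1 ≤ n₁ := hltn
      exact_mod_cast this
    have h₂lt : ((n₂ : ℝ) + 1) ^ (1 - p) < (n₂ : ℝ) * z₂ ^ p + (1 - (n₂ : ℝ) * z₂) ^ p := by
      rw [← gval_left p hp n₂ hn₂]
      exact gmono p hp n₂ hn₂ ⟨le_refl _, hab₂⟩ hmem₂ hz₂.1
    calc (n₁ : ℝ) * z₁ ^ p + (1 - (n₁ : ℝ) * z₁) ^ p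
        ≤ (n₁ : ℝ) ^ (1 - p) := h₁le
      _ ≤ ((n₂ : ℝ) + 1) ^ (1 - p) := hstep
      _ < (n₂ : ℝ) * z₂ ^ p + (1 - (n₂ : ℝ) * z₂) ^ p := h₂lt

/-- For `p > 1` and `C ∈ (0,1)`, there is a unique `z ∈ (0,1)` with
`⌊z⁻¹⌋·z^p + (1 − ⌊z⁻¹⌋·z)^p = C`. -/
theorem floor_rpow_exists_unique (p C : ℝ) (hp : 1 < p) (hC : C ∈ Set.Ioo (0:ℝ) 1) :
    ∃! z : ℝ, z ∈ Set.Ioo (0:ℝ) 1 ∧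
      (⌊z⁻¹⌋ : ℝ) * z ^ p + (1 - (⌊z⁻¹⌋ : ℝ) * z) ^ p = C := by
  obtain ⟨hC0, hC1⟩ := hC
  have hp1 : (0:ℝ) < p - 1 := by linarith
  set t := C ^ (-(p - 1)⁻¹) with htdef
  have ht : 1 < t := by
    rw [htdef, Real.one_lt_rpow_iff_of_pos hC0]
    exact Or.inr ⟨hC1, by linarith [inv_pos.mpr hp1]⟩
  set n := ⌊t⌋ with hndef
  have hn1 : 1 ≤ n := Int.le_floor.mpr (by exact_mod_cast ht.le)
  have hn0 : (0:ℝ) < (n:ℝ) := by exact_mod_cast hn1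
  have hpos : (0:ℝ) < (n:ℝ) + 1 := by linarith
  have hnt : (n:ℝ) ≤ t := Int.floor_le t
  have htn : t < (n:ℝ) + 1 := by exact_mod_cast Int.lt_floor_add_one t
  have htC : t ^ (1 - p) = C := by
    rw [htdef, ← Real.rpow_mul hC0.le]
    rw [show -(p - 1)⁻¹ * (1 - p) = 1 from by field_simp; ring, Real.rpow_one]
  have hCle : C ≤ (n:ℝ) ^ (1 - p) := by
    rw [← htC]; exact Real.rpow_le_rpow_of_nonpos hn0 hnt (by linarith)
  have hClt : ((n:ℝ) + 1) ^ (1 - p) < C := by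
    rw [← htC]
    exact Real.rpow_lt_rpow_of_neg (by linarith) htn (by linarith)
  set a := ((n:ℝ) + 1)⁻¹ with hadef
  set b := (n:ℝ)⁻¹ with hbdef
  have hab : a ≤ b := by
    rw [hadef, hbdef]
    nlinarith [mul_inv_cancel₀ hn0.ne', mul_inv_cancel₀ hpos.ne',
      inv_pos.mpr hn0, inv_pos.mpr hpos]
  have hcont : ContinuousOn (fun z : ℝ => (n:ℝ) * z ^ p + (1 - (n:ℝ) * z) ^ p) (Icc a b) :=
    fun x _ => (gval_hasDerivAt p hp (n:ℝ) x).continuousAt.continuousWithinAt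
  have hmemC : C ∈ Ioc ((fun z : ℝ => (n:ℝ) * z ^ p + (1 - (n:ℝ) * z) ^ p) a)
      ((fun z : ℝ => (n:ℝ) * z ^ p + (1 - (n:ℝ) * z) ^ p) b) := by
    constructor
    · show (n:ℝ) * a ^ p + (1 - (n:ℝ) * a) ^ p < C
      rw [hadef, gval_left p hp n hn1]
      exact hClt
    · show C ≤ (n:ℝ) * b ^ p + (1 - (n:ℝ) * b) ^ p
      rw [hbdef, gval_right p hp n hn1]
      exact hCle
  obtain ⟨z, hzI, hgz⟩ := intermediate_value_Ioc hab hcont hmemC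
  have hz0 : 0 < z := lt_trans (inv_pos.mpr hpos) hzI.1
  have hn1' : (1:ℝ) ≤ (n:ℝ) := by exact_mod_cast hn1
  have hble : b ≤ 1 := by
    rw [hbdef]
    nlinarith [mul_inv_cancel₀ hn0.ne', inv_pos.mpr hn0,
      mul_nonneg (sub_nonneg.mpr hn1') (inv_pos.mpr hn0).le]
  have hz1 : z < 1 := by
    rcases eq_or_lt_of_le (hzI.2.trans hble) with h | h
    · exfalso
      have hb1 : b = 1 := le_antisymm hble (h ▸ hzI.2)
      have hnn : (n:ℝ) = 1 := by
        rw [hbdef] at hb1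
        nlinarith [mul_inv_cancel₀ hn0.ne']
      simp only [h, hnn, one_mul, Real.one_rpow, sub_self,
        Real.zero_rpow (by linarith : p ≠ 0), add_zero] at hgz
      linarith
    · exact h
  have hfl : ⌊z⁻¹⌋ = n := floor_eq_of_mem z n hn1 hzI
  refine ⟨z, ⟨⟨hz0, hz1⟩, by rw [hfl]; exact hgz⟩, ?_⟩
  rintro y ⟨hyI, hyC⟩
  have hzC : (⌊z⁻¹⌋ : ℝ) * z ^ p + (1 - (⌊z⁻¹⌋ : ℝ) * z) ^ p = C := by
    rw [hfl]; exact hgz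
  exact (fmono p hp).injOn hyI ⟨hz0, hz1⟩ (hyC.trans hzC.symm)
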